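/- Let σ > −1/2, s > 0, let U ⊂ (0,∞) be an open set, let f₁ ∈ C¹(U), f₂ ∈ C(U), and let h ∈ C²(U) be positive. Consider the differential operator P acting on C²-functions on U by Pu = −u'' + s²x²u − 2f₁u' + f₂u. Then the identity P(h·(φ|_U)) = h·((L_σφ)|_U) holds on U for every even Schwartz function φ : ℝ → ℝ if and only if f₂(x) = σ(σ−1)x^{−2} − f₁(x)² − f₁'(x) on U and h(x) = x^σ·e^{−F₁(x)} on U for some function F₁ ∈ C²(U) with F₁' = f₁. -/

import Mathlib

open MeasureTheory Real

noncomputable section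

/-- The even part of a function. -/
def evenPart (φ : ℝ → ℝ) : ℝ → ℝ := fun x => (φ x + φ (-x)) / 2

/-- The odd part of a function. -/
def oddPart (φ : ℝ → ℝ) : ℝ → ℝ := fun x => (φ x - φ (-x)) / 2

/-- For an odd smooth function ψ, `invX ψ` is the smooth function η with ψ(x) = x·η(x). -/
def invX (ψ : ℝ → ℝ) : ℝ → ℝ := fun x => if x = 0 then deriv ψ 0 else ψ x / x

/-- The Dunkl operator `T_σ φ = φ' + 2σ·x⁻¹(φ_odd)`. -/
def dunklT (σ : ℝ) (φ : ℝ → ℝ) : ℝ → ℝ := fun x => deriv φ x + 2 * σ * invX (oddPart φ) x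

/-- The Dunkl harmonic oscillator `L_σ φ = -T_σ(T_σ φ) + s²x²φ`. -/
def dunklL (σ s : ℝ) (φ : ℝ → ℝ) : ℝ → ℝ :=
  fun x => -dunklT σ (dunklT σ φ) x + s ^ 2 * x ^ 2 * φ x

/-- Index pairs (i, j) with i + j ≤ m. -/
def idx (m : ℕ) : Finset (ℕ × ℕ) :=
  (Finset.range (m + 1) ×ˢ Finset.range (m + 1)).filter fun p => p.1 + p.2 ≤ m

def idxE (m : ℕ) : Finset (ℕ × ℕ) := (idx m).filter fun p => Even (p.1 + p.2)

def idxO (m : ℕ) : Finset (ℕ × ℕ) := (idx m).filter fun p => ¬ Even (p.1 + p.2)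

/-- The Schwartz norm ‖φ‖_{S^m}. -/
def SNorm (m : ℕ) (φ : ℝ → ℝ) : ℝ :=
  ∑ p ∈ idx m, ⨆ x : ℝ, |x ^ p.1 * iteratedDeriv p.2 φ x|

/-- Generic norm for σ ≥ 0: Σ_{i+j≤m} sup_x |x|^σ |x^i g_j(x)|. -/
def gNormNonneg (σ : ℝ) (m : ℕ) (g : ℕ → ℝ → ℝ) : ℝ :=
  ∑ p ∈ idx m, ⨆ x : ℝ, |x| ^ σ * |x ^ p.1 * g p.2 x|

/-- Generic norm for σ < 0 on even functions. -/
def gNormNegE (σ : ℝ) (m : ℕ) (g : ℕ → ℝ → ℝ) : ℝ :=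
  (∑ p ∈ idxE m, ((⨆ x : {x : ℝ // 0 < |x| ∧ |x| ≤ 1}, |(x : ℝ) ^ p.1 * g p.2 x|) +
      ⨆ x : {x : ℝ // 1 ≤ |x|}, |(x : ℝ)| ^ σ * |(x : ℝ) ^ p.1 * g p.2 x|)) +
  ∑ p ∈ idxO m, ⨆ x : {x : ℝ // x ≠ 0}, |(x : ℝ)| ^ σ * |(x : ℝ) ^ p.1 * g p.2 x|

/-- Generic norm for σ < 0 on odd functions. -/
def gNormNegO (σ : ℝ) (m : ℕ) (g : ℕ → ℝ → ℝ) : ℝ :=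
  (∑ p ∈ idxO m, ((⨆ x : {x : ℝ // 0 < |x| ∧ |x| ≤ 1}, |(x : ℝ) ^ p.1 * g p.2 x|) +
      ⨆ x : {x : ℝ // 1 ≤ |x|}, |(x : ℝ)| ^ σ * |(x : ℝ) ^ p.1 * g p.2 x|)) +
  ∑ p ∈ idxE m, ⨆ x : {x : ℝ // x ≠ 0}, |(x : ℝ)| ^ σ * |(x : ℝ) ^ p.1 * g p.2 x|

/-- The family of iterated derivatives of φ. -/
def derivFam (φ : ℝ → ℝ) : ℕ → ℝ → ℝ := fun j => iteratedDeriv j φ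

/-- The family of iterates of the Dunkl operator applied to φ. -/
def dunklFam (σ : ℝ) (φ : ℝ → ℝ) : ℕ → ℝ → ℝ := fun j => (dunklT σ)^[j] φ

/-- Weakly perturbed Schwartz norm ‖φ‖_{S_{w,σ}^m} for even φ. -/
def SwNormEven (σ : ℝ) (m : ℕ) (φ : ℝ → ℝ) : ℝ :=
  if 0 ≤ σ then gNormNonneg σ m (derivFam φ) else gNormNegE σ m (derivFam φ)

/-- Weakly perturbed Schwartz norm ‖φ‖_{S_{w,σ}^m} for odd φ. -/
def SwNormOdd (σ : ℝ) (m : ℕ) (φ : ℝ → ℝ) : ℝ :=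
  if 0 ≤ σ then gNormNonneg σ m (derivFam φ) else gNormNegO σ m (derivFam φ)

/-- Perturbed Schwartz norm ‖φ‖_{S_σ^m} for even φ. -/
def SpNormEven (σ : ℝ) (m : ℕ) (φ : ℝ → ℝ) : ℝ :=
  if 0 ≤ σ then gNormNonneg σ m (dunklFam σ φ) else gNormNegE σ m (dunklFam σ φ)

/-- Perturbed Schwartz norm ‖φ‖_{S_σ^m} for odd φ. -/
def SpNormOdd (σ : ℝ) (m : ℕ) (φ : ℝ → ℝ) : ℝ :=
  if 0 ≤ σ then gNormNonneg σ m (dunklFam σ φ) else gNormNegO σ m (dunklFam σ φ)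

/-- Perturbed Schwartz norm for a general φ: the sum of the norms of its even and odd parts. -/
def SpNorm (σ : ℝ) (m : ℕ) (φ : ℝ → ℝ) : ℝ :=
  SpNormEven σ m (evenPart φ) + SpNormOdd σ m (oddPart φ)

/-- The perturbed Sobolev norm ‖φ‖_{W_σ^m} = ⟨(1+L_σ)^m φ, φ⟩_σ^{1/2}. -/
def WNorm (σ s : ℝ) (m : ℕ) (φ : ℝ → ℝ) : ℝ :=
  Real.sqrt (∫ x : ℝ, ((fun ψ => ψ + dunklL σ s ψ)^[m] φ) x * φ x * |x| ^ (2 * σ))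

/-- The Dunkl creation operator `B' φ = sxφ - T_σ φ`. -/
def Bop' (σ s : ℝ) (φ : ℝ → ℝ) : ℝ → ℝ := fun x => s * x * φ x - dunklT σ φ x

/-- The generalized Hermite functions φ_k. -/
def hermiteFn (σ s : ℝ) : ℕ → ℝ → ℝ
  | 0 => fun x => s ^ ((2 * σ + 1) / 4) * (Real.Gamma (σ + 1 / 2)) ^ (-(1 / 2) : ℝ) *
      Real.exp (-s * x ^ 2 / 2)
  | (k + 1) =>
      if Even (k + 1) then
        fun x => (2 * ((k : ℝ) + 1) * s) ^ (-(1 / 2) : ℝ) * Bop' σ s (hermiteFn σ s k) x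
      else
        fun x => (2 * ((k : ℝ) + 1 + 2 * σ) * s) ^ (-(1 / 2) : ℝ) * Bop' σ s (hermiteFn σ s k) x

/-- The perturbed factorial m!_σ. -/
def pfact (σ : ℝ) : ℕ → ℝ
  | 0 => 1
  | (m + 1) =>
      if Even (m + 1) then pfact σ m * ((m : ℝ) + 1)
      else pfact σ m * ((m : ℝ) + 1 + 2 * σ)

/-- The generalized Hermite polynomials p_k = φ_k · e^{sx²/2}. -/
def genHermitePoly (σ s : ℝ) (k : ℕ) : ℝ → ℝ :=
  fun x => hermiteFn σ s k x * Real.exp (s * x ^ 2 / 2)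

end

noncomputable section Aux

open Filter Metric
open scoped ContDiff

lemma oddPart_even_eq_zero {φ : ℝ → ℝ} (hφ : ∀ x, φ (-x) = φ x) :
    oddPart φ = fun _ => 0 := by
  funext y; simp [oddPart, hφ y]

lemma deriv_even_odd {φ : ℝ → ℝ} (hφ : ∀ x, φ (-x) = φ x) (y : ℝ) :
    deriv φ (-y) = -deriv φ y := by
  have h1 : (fun x => φ (-x)) = φ := funext hφ
  have h2 := deriv_comp_neg (f := φ) (x := y)
  rw [h1] at h2
  linarith

lemma dunklL_even (σ s : ℝ) {φ : ℝ → ℝ} (hφ : ∀ x, φ (-x) = φ x) {x : ℝ} (hx : x ≠ 0) :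
    dunklL σ s φ x = -(deriv (deriv φ) x) - 2 * σ * deriv φ x / x + s ^ 2 * x ^ 2 * φ x := by
  have h0 : invX (oddPart φ) = fun _ => 0 := by
    rw [oddPart_even_eq_zero hφ]; funext y
    by_cases hy : y = 0 <;> simp [invX, hy]
  have hT : dunklT σ φ = deriv φ := by funext y; simp [dunklT, h0]
  have hoddd : oddPart (deriv φ) = deriv φ := by
    funext y; simp only [oddPart, deriv_even_odd hφ y]; ring
  have hTT : dunklT σ (dunklT σ φ) x = deriv (deriv φ) x + 2 * σ * (deriv φ x / x) := by
    rw [hT]; simp [dunklT, hoddd, invX, hx]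
  simp only [dunklL, hTT]; ring

/-- Build a Schwartz map from a smooth compactly supported function. -/
def mkSchwartz (f : ℝ → ℝ) (hf : ContDiff ℝ ∞ f) (hsupp : HasCompactSupport f) :
    SchwartzMap ℝ ℝ where
  toFun := f
  smooth' := hf
  decay' := by
    intro k n
    have hcont : Continuous fun x : ℝ => ‖x‖ ^ k * ‖iteratedFDeriv ℝ n f x‖ :=
      (continuous_norm.pow k).mul (hf.continuous_iteratedFDeriv (by exact_mod_cast (le_top : (n : ℕ∞) ≤ ⊤))).norm
    have hsupp2 : HasCompactSupport fun x : ℝ => ‖x‖ ^ k * ‖iteratedFDeriv ℝ n f x‖ :=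
      ((hsupp.iteratedFDeriv n).norm).mul_left
    obtain ⟨C, hC⟩ := hcont.bounded_above_of_compact_support hsupp2
    exact ⟨C, fun x => (le_abs_self _).trans ((Real.norm_eq_abs _) ▸ hC x)⟩

@[simp] lemma mkSchwartz_apply (f : ℝ → ℝ) (hf : ContDiff ℝ ∞ f)
    (hsupp : HasCompactSupport f) (x : ℝ) : mkSchwartz f hf hsupp x = f x := rfl

lemma deriv_eventuallyEq {F g : ℝ → ℝ} {U : Set ℝ} (hU : IsOpen U) {x : ℝ} (hx : x ∈ U)
    (hfg : ∀ y ∈ U, F y = g y) : deriv F x = deriv g x :=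
  Filter.EventuallyEq.deriv_eq (by filter_upwards [hU.mem_nhds hx] with y hy using hfg y hy)

lemma exists_even_schwartz (x₀ : ℝ) (hx₀ : 0 < x₀) :
    ∃ φ ψ : SchwartzMap ℝ ℝ, (∀ x, φ (-x) = φ x) ∧ (∀ x, ψ (-x) = ψ x) ∧
      φ x₀ = 1 ∧ deriv (⇑φ) x₀ = 0 ∧ ψ x₀ = x₀ ^ 2 ∧ deriv (⇑ψ) x₀ = 2 * x₀ := by
  set c : ContDiffBump (0 : ℝ) := ⟨x₀ + 1, x₀ + 2, by linarith, by linarith⟩ with hc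
  have hc1 : ∀ y ∈ Metric.ball x₀ 1, c y = 1 := by
    intro y hy
    apply c.one_of_mem_closedBall
    simp only [Metric.mem_closedBall, Real.dist_eq, sub_zero]
    simp only [Metric.mem_ball, Real.dist_eq] at hy
    have h1 := abs_sub_abs_le_abs_sub y x₀
    rw [abs_of_pos hx₀] at h1
    show |y| ≤ x₀ + 1
    linarith
  have hb : x₀ ∈ Metric.ball x₀ 1 := Metric.mem_ball_self one_pos
  have hsmooth2 : ContDiff ℝ ∞ fun y : ℝ => y ^ 2 * c y :=
    (contDiff_id.pow 2).mul c.contDiff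
  have hsupp2 : HasCompactSupport fun y : ℝ => y ^ 2 * c y :=
    c.hasCompactSupport.mul_left
  refine ⟨mkSchwartz (⇑c) c.contDiff c.hasCompactSupport,
    mkSchwartz (fun y => y ^ 2 * c y) hsmooth2 hsupp2,
    fun x => c.neg x, fun x => by simp [neg_pow, c.neg x], ?_, ?_, ?_, ?_⟩
  · exact hc1 x₀ hb
  · show deriv (⇑c) x₀ = 0
    have : (⇑c : ℝ → ℝ) =ᶠ[nhds x₀] fun _ => (1 : ℝ) :=
      Filter.eventuallyEq_of_mem (Metric.ball_mem_nhds x₀ one_pos) hc1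
    rw [this.deriv_eq, deriv_const]
  · show x₀ ^ 2 * c x₀ = x₀ ^ 2
    rw [hc1 x₀ hb, mul_one]
  · show deriv (fun y => y ^ 2 * c y) x₀ = 2 * x₀
    have : (fun y : ℝ => y ^ 2 * c y) =ᶠ[nhds x₀] fun y => y ^ 2 := by
      filter_upwards [Metric.ball_mem_nhds x₀ one_pos] with y hy
      rw [hc1 y hy, mul_one]
    rw [this.deriv_eq]
    simp

end Aux

theorem perturbed_harmonic_oscillator_characterization (σ s : ℝ) (hσ : -(1/2) < σ)
    (hs : 0 < s) (U : Set ℝ) (hU : IsOpen U) (hUsub : U ⊆ Set.Ioi (0 : ℝ))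
    (f₁ f₂ h : ℝ → ℝ) (hf₁ : ContDiffOn ℝ 1 f₁ U) (hf₂ : ContinuousOn f₂ U)
    (hh : ContDiffOn ℝ 2 h U) (hhpos : ∀ x ∈ U, 0 < h x) :
    (∀ φ : SchwartzMap ℝ ℝ, (∀ x, φ (-x) = φ x) → ∀ x ∈ U,
        -deriv (deriv fun y => h y * φ y) x + s ^ 2 * x ^ 2 * (h x * φ x) -
            2 * f₁ x * deriv (fun y => h y * φ y) x + f₂ x * (h x * φ x) =
          h x * dunklL σ s (⇑φ) x) ↔
      ((∀ x ∈ U, f₂ x = σ * (σ - 1) / x ^ 2 - f₁ x ^ 2 - deriv f₁ x) ∧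
        ∃ F₁ : ℝ → ℝ, ContDiffOn ℝ 2 F₁ U ∧ (∀ x ∈ U, deriv F₁ x = f₁ x) ∧
          ∀ x ∈ U, h x = x ^ σ * Real.exp (-F₁ x)) := by
  have hdh : ContDiffOn ℝ 1 (deriv h) U := hh.deriv_of_isOpen hU (by norm_num)
  have hdiffh : ∀ y ∈ U, DifferentiableAt ℝ h y := fun y hy =>
    (hh.contDiffAt (hU.mem_nhds hy)).differentiableAt two_ne_zero
  constructor
  · intro H
    -- Step 1: extract the pointwise linear relation
    have key : ∀ x ∈ U, ∀ φ : SchwartzMap ℝ ℝ, (∀ y, (φ : ℝ → ℝ) (-y) = φ y) →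
        (-(deriv (deriv h) x) - 2 * f₁ x * deriv h x + f₂ x * h x) * φ x
          + (-(2 * deriv h x) - 2 * f₁ x * h x + 2 * σ * h x / x) * deriv (⇑φ) x = 0 := by
      intro x hx φ hφe
      have hx0 : (0:ℝ) < x := hUsub hx
      have hφd : Differentiable ℝ (⇑φ) := (φ.smooth 1).differentiable one_ne_zero
      have hφ'c := (contDiff_infty_iff_deriv.mp φ.smooth').2
      have hder1 : ∀ y ∈ U, deriv (fun z => h z * φ z) y
          = deriv h y * φ y + h y * deriv (⇑φ) y := fun y hy =>
        deriv_mul (hdiffh y hy) (hφd y)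
      have hd2 : deriv (deriv fun z => h z * φ z) x
          = deriv (deriv h) x * φ x + 2 * (deriv h x * deriv (⇑φ) x)
            + h x * deriv (deriv (⇑φ)) x := by
        rw [deriv_eventuallyEq hU hx hder1]
        have h1 : HasDerivAt (deriv h) (deriv (deriv h) x) x :=
          ((hdh.contDiffAt (hU.mem_nhds hx)).differentiableAt one_ne_zero).hasDerivAt
        have h2 : HasDerivAt h (deriv h x) x := (hdiffh x hx).hasDerivAt
        have h3 : HasDerivAt (⇑φ) (deriv (⇑φ) x) x := (hφd x).hasDerivAt
        have h4 : HasDerivAt (deriv (⇑φ)) (deriv (deriv (⇑φ)) x) x :=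
          ((hφ'c.differentiable (by simp)) x).hasDerivAt
        rw [((h1.fun_mul h3).fun_add (h2.fun_mul h4)).deriv]; ring
      have heq := H φ hφe x hx
      rw [hd2, hder1 x hx, dunklL_even σ s hφe (ne_of_gt hx0)] at heq
      linear_combination heq
    have hAB : ∀ x ∈ U, (-(deriv (deriv h) x) - 2 * f₁ x * deriv h x + f₂ x * h x) = 0 ∧
        (-(2 * deriv h x) - 2 * f₁ x * h x + 2 * σ * h x / x) = 0 := by
      intro x hx
      have hx0 : (0:ℝ) < x := hUsub hx
      obtain ⟨φ, ψ, hφe, hψe, hφv, hφd, hψv, hψd⟩ := exists_even_schwartz x hx0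
      have k1 := key x hx φ hφe
      have k2 := key x hx ψ hψe
      rw [hφv, hφd] at k1
      rw [hψv, hψd] at k2
      have hA : (-(deriv (deriv h) x) - 2 * f₁ x * deriv h x + f₂ x * h x) = 0 := by
        linear_combination k1
      refine ⟨hA, ?_⟩
      have hB2 : (-(2 * deriv h x) - 2 * f₁ x * h x + 2 * σ * h x / x) * (2 * x) = 0 := by
        linear_combination k2 - x ^ 2 * k1
      have h2x : (2 : ℝ) * x ≠ 0 := by positivity
      exact (mul_eq_zero.mp hB2).resolve_right h2x
    have hBx : ∀ y ∈ U, deriv h y = (σ * y⁻¹ - f₁ y) * h y := by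
      intro y hy
      have hy0 : (0:ℝ) < y := hUsub hy
      have := (hAB y hy).2
      have hyne : y ≠ 0 := ne_of_gt hy0
      field_simp at this ⊢
      linarith
    constructor
    · -- the formula for f₂
      intro x hx
      have hx0 : (0:ℝ) < x := hUsub hx
      have hxne : x ≠ 0 := ne_of_gt hx0
      have hhne : h x ≠ 0 := ne_of_gt (hhpos x hx)
      have hf₁x : HasDerivAt f₁ (deriv f₁ x) x :=
        ((hf₁.contDiffAt (hU.mem_nhds hx)).differentiableAt one_ne_zero).hasDerivAt
      have hw : HasDerivAt (fun y : ℝ => σ * y⁻¹ - f₁ y) (σ * -(x ^ 2)⁻¹ - deriv f₁ x) x :=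
        ((hasDerivAt_inv hxne).const_mul σ).sub hf₁x
      have hhx' : HasDerivAt h ((σ * x⁻¹ - f₁ x) * h x) x := by
        rw [← hBx x hx]; exact (hdiffh x hx).hasDerivAt
      have hd2 : deriv (deriv h) x
          = (σ * -(x ^ 2)⁻¹ - deriv f₁ x) * h x + (σ * x⁻¹ - f₁ x) * ((σ * x⁻¹ - f₁ x) * h x) := by
        rw [deriv_eventuallyEq hU hx hBx]
        exact (hw.mul hhx').deriv
      have hA := (hAB x hx).1
      rw [hd2, hBx x hx] at hA
      have hgoal : f₂ x * h x = (σ * (σ - 1) / x ^ 2 - f₁ x ^ 2 - deriv f₁ x) * h x := by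
        linear_combination hA
      exact mul_right_cancel₀ hhne hgoal
    · -- construction of F₁
      refine ⟨fun y => σ * Real.log y - Real.log (h y), ?_, ?_, ?_⟩
      · have hlog : ContDiffOn ℝ 2 Real.log U := fun y hy =>
          (Real.contDiffAt_log.mpr (ne_of_gt (hUsub hy))).contDiffWithinAt
        exact (contDiffOn_const.mul hlog).sub (hh.log fun y hy => ne_of_gt (hhpos y hy))
      · intro x hx
        have hx0 : (0:ℝ) < x := hUsub hx
        have hxne : x ≠ 0 := ne_of_gt hx0
        have hhne : h x ≠ 0 := ne_of_gt (hhpos x hx)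
        have hhx' : HasDerivAt h ((σ * x⁻¹ - f₁ x) * h x) x := by
          rw [← hBx x hx]; exact (hdiffh x hx).hasDerivAt
        have hF : HasDerivAt (fun y => σ * Real.log y - Real.log (h y))
            (σ * x⁻¹ - ((σ * x⁻¹ - f₁ x) * h x) / h x) x :=
          ((Real.hasDerivAt_log hxne).const_mul σ).sub (hhx'.log hhne)
        rw [hF.deriv]
        field_simp
        ring
      · intro x hx
        have hx0 : (0:ℝ) < x := hUsub hx
        rw [Real.rpow_def_of_pos hx0, neg_sub, Real.exp_sub, Real.exp_log (hhpos x hx)]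
        rw [mul_comm (Real.log x) σ]
        field_simp
  · rintro ⟨h2, F₁, hF₁C, hF₁', hhx⟩ φ hφe x hx
    have hx0 : (0:ℝ) < x := hUsub hx
    have hxne : x ≠ 0 := ne_of_gt hx0
    -- derivative of h on U
    have hder : ∀ y ∈ U, HasDerivAt h ((σ * y⁻¹ - f₁ y) * h y) y := by
      intro y hy
      have hy0 : (0:ℝ) < y := hUsub hy
      have hyne : y ≠ 0 := ne_of_gt hy0
      have ha : HasDerivAt (fun z : ℝ => z ^ σ) (σ * y ^ (σ - 1)) y :=
        Real.hasDerivAt_rpow_const (Or.inl hyne)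
      have hF : HasDerivAt F₁ (f₁ y) y := by
        rw [← hF₁' y hy]
        exact ((hF₁C.contDiffAt (hU.mem_nhds hy)).differentiableAt two_ne_zero).hasDerivAt
      have hb : HasDerivAt (fun z => Real.exp (-F₁ z)) (Real.exp (-F₁ y) * -f₁ y) y :=
        hF.neg.exp
      have hc : HasDerivAt (fun z => z ^ σ * Real.exp (-F₁ z))
          (σ * y ^ (σ - 1) * Real.exp (-F₁ y) + y ^ σ * (Real.exp (-F₁ y) * -f₁ y)) y :=
        ha.mul hb
      have heq : h =ᶠ[nhds y] fun z => z ^ σ * Real.exp (-F₁ z) := by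
        filter_upwards [hU.mem_nhds hy] with z hz using hhx z hz
      have hc' : HasDerivAt h
          (σ * y ^ (σ - 1) * Real.exp (-F₁ y) + y ^ σ * (Real.exp (-F₁ y) * -f₁ y)) y :=
        hc.congr_of_eventuallyEq heq
      have hval : σ * y ^ (σ - 1) * Real.exp (-F₁ y) + y ^ σ * (Real.exp (-F₁ y) * -f₁ y)
          = (σ * y⁻¹ - f₁ y) * h y := by
        rw [hhx y hy, sub_eq_add_neg σ 1, Real.rpow_add hy0, Real.rpow_neg_one]
        ring
      rw [hval] at hc'
      exact hc'
    have hφd : Differentiable ℝ (⇑φ) := (φ.smooth 1).differentiable one_ne_zero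
    have hφ'c := (contDiff_infty_iff_deriv.mp φ.smooth').2
    have hφ'd : Differentiable ℝ (deriv (⇑φ)) :=
      hφ'c.differentiable (by simp)
    have hder1 : ∀ y ∈ U, deriv (fun z => h z * φ z) y
        = (σ * y⁻¹ - f₁ y) * h y * φ y + h y * deriv (⇑φ) y := by
      intro y hy
      rw [deriv_fun_mul ((hder y hy).differentiableAt) (hφd y), (hder y hy).deriv]
    have hf₁x : HasDerivAt f₁ (deriv f₁ x) x :=
      ((hf₁.contDiffAt (hU.mem_nhds hx)).differentiableAt one_ne_zero).hasDerivAt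
    have hw : HasDerivAt (fun y : ℝ => σ * y⁻¹ - f₁ y) (σ * -(x ^ 2)⁻¹ - deriv f₁ x) x :=
      ((hasDerivAt_inv hxne).const_mul σ).sub hf₁x
    have hd2 : deriv (deriv fun z => h z * φ z) x
        = ((σ * -(x ^ 2)⁻¹ - deriv f₁ x) * h x + (σ * x⁻¹ - f₁ x) * ((σ * x⁻¹ - f₁ x) * h x))
            * φ x
          + (σ * x⁻¹ - f₁ x) * h x * deriv (⇑φ) x
          + ((σ * x⁻¹ - f₁ x) * h x * deriv (⇑φ) x + h x * deriv (deriv (⇑φ)) x) := by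
      rw [deriv_eventuallyEq hU hx hder1]
      exact (((hw.mul (hder x hx)).mul (hφd x).hasDerivAt).add
        ((hder x hx).mul (hφ'd x).hasDerivAt)).deriv
    rw [hd2, hder1 x hx, dunklL_even σ s hφe hxne, h2 x hx]
    field_simp
    ring
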